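/- Reduction of the energy harvesting multiple access channel with energy cooperation to a single-user problem: let g_1 = h_1/σ_2², g_2 = h_2/σ_1² > 0, α_1, α_2 ∈ [0,1], c_1 = max{g_1, α_1 g_2}, c_2 = max{g_2, α_2 g_1}. Then the supremum of the sum-throughput Σ_{i=1}^{N} (1/2)·log(1 + g_1 p_{1,i} + g_2 p_{2,i}) over all feasible policies equals the supremum of Σ_{i=1}^{N} (1/2)·log(1 + q_i) over all sequences q_i ≥ 0 satisfying the aggregate causality constraints Σ_{n=1}^{i} q_n ≤ Σ_{n=1}^{i} (c_1 E_{1,n} + c_2 E_{2,n}) for all i = 1,…,N. -/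

import Mathlib

lemma mac_dir1 (g1 g2 a1 a2 P1 P2 D1 D2 A B : ℝ)
    (hg1 : 0 < g1) (hg2 : 0 < g2)
    (ha1 : 0 ≤ a1) (ha1' : a1 ≤ 1) (ha2 : 0 ≤ a2) (ha2' : a2 ≤ 1)
    (hP1 : 0 ≤ P1) (hP2 : 0 ≤ P2) (hD1 : 0 ≤ D1) (hD2 : 0 ≤ D2)
    (h1 : P1 + D1 ≤ A + a2 * D2) (h2 : P2 + D2 ≤ B + a1 * D1) :
    g1 * P1 + g2 * P2 ≤ max g1 (a1 * g2) * A + max g2 (a2 * g1) * B := by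
  set c1 := max g1 (a1 * g2) with hc1
  set c2 := max g2 (a2 * g1) with hc2
  have hc1g : g1 ≤ c1 := le_max_left _ _
  have hc2g : g2 ≤ c2 := le_max_left _ _
  have hc1pos : 0 < c1 := lt_of_lt_of_le hg1 hc1g
  have hc2pos : 0 < c2 := lt_of_lt_of_le hg2 hc2g
  have hab : a1 * a2 ≤ 1 := mul_le_one₀ ha1' ha2 ha2'
  have h12 : a1 * c2 ≤ c1 := by
    rw [hc2, mul_max_of_nonneg _ _ ha1]
    refine max_le (le_max_right _ _) (le_trans ?_ (le_max_left _ _))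
    nlinarith [mul_nonneg (sub_nonneg.mpr hab) hg1.le]
  have h21 : a2 * c1 ≤ c2 := by
    rw [hc1, mul_max_of_nonneg _ _ ha2]
    refine max_le (le_max_right _ _) (le_trans ?_ (le_max_left _ _))
    nlinarith [mul_nonneg (sub_nonneg.mpr (by nlinarith : a2 * a1 ≤ 1)) hg2.le]
  nlinarith [mul_le_mul_of_nonneg_left h1 hc1pos.le,
    mul_le_mul_of_nonneg_left h2 hc2pos.le,
    mul_nonneg hD1 (sub_nonneg.mpr h12), mul_nonneg hD2 (sub_nonneg.mpr h21),
    mul_nonneg hP1 (sub_nonneg.mpr hc1g), mul_nonneg hP2 (sub_nonneg.mpr hc2g)]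

noncomputable def Ucum (q a : ℕ → ℝ) : ℕ → ℝ
  | 0 => 0
  | n+1 => min (Ucum q a n + q n) (∑ m ∈ Finset.range (n+1), a m)

lemma Ucum_le (q a : ℕ → ℝ) (n : ℕ) :
    Ucum q a n ≤ ∑ m ∈ Finset.range n, a m := by
  cases n with
  | zero => simp [Ucum]
  | succ n => exact min_le_right _ _

lemma Ucum_le_add (q a : ℕ → ℝ) (n : ℕ) :
    Ucum q a (n+1) ≤ Ucum q a n + q n := min_le_left _ _

lemma Ucum_mono (q a : ℕ → ℝ) (n : ℕ) (hq : 0 ≤ q n) (ha : 0 ≤ a n) :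
    Ucum q a n ≤ Ucum q a (n+1) := by
  refine le_min (by linarith) ?_
  calc Ucum q a n ≤ ∑ m ∈ Finset.range n, a m := Ucum_le q a n
    _ ≤ ∑ m ∈ Finset.range (n+1), a m := by
        rw [Finset.sum_range_succ]; linarith

lemma Ucum_resid (q a b : ℕ → ℝ) (N : ℕ)
    (hb : ∀ n < N, 0 ≤ b n)
    (hS : ∀ i < N, ∑ n ∈ Finset.range (i+1), q n
        ≤ ∑ n ∈ Finset.range (i+1), (a n + b n)) :
    ∀ i ≤ N, ∑ n ∈ Finset.range i, q n - Ucum q a i ≤ ∑ n ∈ Finset.range i, b n := by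
  intro i
  induction i with
  | zero => simp [Ucum]
  | succ i ih =>
    intro hi
    have hiN : i < N := hi
    rcases min_cases (Ucum q a i + q i) (∑ m ∈ Finset.range (i+1), a m) with
      ⟨heq, _⟩ | ⟨heq, _⟩
    · have := ih (le_of_lt hiN)
      rw [Finset.sum_range_succ q, Finset.sum_range_succ b]
      have hbn : 0 ≤ b i := hb i hiN
      show _ - Ucum q a (i+1) ≤ _
      rw [show Ucum q a (i+1) = Ucum q a i + q i from heq]
      linarith
    · show _ - Ucum q a (i+1) ≤ _
      rw [show Ucum q a (i+1) = ∑ m ∈ Finset.range (i+1), a m from heq]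
      have := hS i hiN
      rw [Finset.sum_add_distrib] at this
      linarith

/-- Reduction of the energy harvesting multiple access channel
with energy cooperation to a single-user problem with scaled aggregate energy
arrivals.  Here `g1 = h1/σ2²` and `g2 = h2/σ1²` are the received SNR gains. -/
theorem stmt_12
    (N : ℕ) (E1 E2 : ℕ → ℝ) (g1 g2 a1 a2 : ℝ)
    (hg1 : 0 < g1) (hg2 : 0 < g2)
    (ha1 : a1 ∈ Set.Icc (0:ℝ) 1) (ha2 : a2 ∈ Set.Icc (0:ℝ) 1)
    (hE : ∀ i < N, 0 ≤ E1 i ∧ 0 ≤ E2 i) :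
    sSup {t : ℝ | ∃ p1 p2 d1 d2 : ℕ → ℝ,
        (∀ i < N, 0 ≤ p1 i ∧ 0 ≤ p2 i ∧ 0 ≤ d1 i ∧ 0 ≤ d2 i) ∧
        (∀ i < N,
          0 ≤ ∑ n ∈ Finset.range (i+1), (E1 n - p1 n + a2 * d2 n - d1 n) ∧
          0 ≤ ∑ n ∈ Finset.range (i+1), (E2 n - p2 n + a1 * d1 n - d2 n)) ∧
        t = ∑ i ∈ Finset.range N, 1/2 * Real.log (1 + g1 * p1 i + g2 * p2 i)}
    = sSup {t : ℝ | ∃ q : ℕ → ℝ,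
        (∀ i < N, 0 ≤ q i) ∧
        (∀ i < N,
          ∑ n ∈ Finset.range (i+1), q n
            ≤ ∑ n ∈ Finset.range (i+1),
                (max g1 (a1 * g2) * E1 n + max g2 (a2 * g1) * E2 n)) ∧
        t = ∑ i ∈ Finset.range N, 1/2 * Real.log (1 + q i)} := by
  classical
  congr 1
  ext t
  simp only [Set.mem_setOf_eq]
  constructor
  · -- forward: policy → single-user sequence
    rintro ⟨p1, p2, d1, d2, hnn, hcon, rfl⟩
    refine ⟨fun i => g1 * p1 i + g2 * p2 i, ?_, ?_, Finset.sum_congr rfl fun i _ => by simp only [add_assoc]⟩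
    · intro i hi
      obtain ⟨h1, h2, _, _⟩ := hnn i hi
      exact add_nonneg (mul_nonneg hg1.le h1) (mul_nonneg hg2.le h2)
    · intro i hi
      have hmem : ∀ n ∈ Finset.range (i+1), n < N :=
        fun n hn => lt_of_lt_of_le (Finset.mem_range.mp hn) hi
      have hP1 : 0 ≤ ∑ n ∈ Finset.range (i+1), p1 n :=
        Finset.sum_nonneg fun n hn => (hnn n (hmem n hn)).1
      have hP2 : 0 ≤ ∑ n ∈ Finset.range (i+1), p2 n :=
        Finset.sum_nonneg fun n hn => (hnn n (hmem n hn)).2.1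
      have hD1 : 0 ≤ ∑ n ∈ Finset.range (i+1), d1 n :=
        Finset.sum_nonneg fun n hn => (hnn n (hmem n hn)).2.2.1
      have hD2 : 0 ≤ ∑ n ∈ Finset.range (i+1), d2 n :=
        Finset.sum_nonneg fun n hn => (hnn n (hmem n hn)).2.2.2
      have hc1 := (hcon i hi).1
      have hc2 := (hcon i hi).2
      simp only [Finset.sum_add_distrib, Finset.sum_sub_distrib, ← Finset.mul_sum] at hc1 hc2 ⊢
      exact mac_dir1 g1 g2 a1 a2 _ _ _ _ _ _ hg1 hg2 ha1.1 ha1.2 ha2.1 ha2.2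
        hP1 hP2 hD1 hD2 (by linarith) (by linarith)
  · -- backward: single-user sequence → policy
    rintro ⟨q, hq, hcon, rfl⟩
    set c1 := max g1 (a1 * g2) with hc1def
    set c2 := max g2 (a2 * g1) with hc2def
    have hc1g : g1 ≤ c1 := le_max_left _ _
    have hc2g : g2 ≤ c2 := le_max_left _ _
    have hc1pos : 0 < c1 := hg1.trans_le hc1g
    have hc2pos : 0 < c2 := hg2.trans_le hc2g
    set a : ℕ → ℝ := fun n => c1 * E1 n with hadef
    set b : ℕ → ℝ := fun n => c2 * E2 n with hbdef
    set u : ℕ → ℝ := fun n => Ucum q a (n+1) - Ucum q a n with hudef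
    set v : ℕ → ℝ := fun n => q n - u n with hvdef
    have hu0 : ∀ n < N, 0 ≤ u n := fun n hn =>
      sub_nonneg.mpr (Ucum_mono q a n (hq n hn) (mul_nonneg hc1pos.le (hE n hn).1))
    have huq : ∀ n, u n ≤ q n := by
      intro n
      have := Ucum_le_add q a n
      simp only [hudef]
      linarith
    have hv0 : ∀ n < N, 0 ≤ v n := fun n hn => sub_nonneg.mpr (huq n)
    have hUsum : ∀ i, ∑ n ∈ Finset.range i, u n = Ucum q a i := by
      intro i
      have h := Finset.sum_range_sub (f := Ucum q a) i
      simpa [hudef, Ucum] using h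
    have hVsum : ∀ i, ∑ n ∈ Finset.range i, v n
        = ∑ n ∈ Finset.range i, q n - Ucum q a i := by
      intro i
      simp only [hvdef, Finset.sum_sub_distrib, hUsum]
    have hUA : ∀ i ≤ N, Ucum q a i ≤ c1 * ∑ n ∈ Finset.range i, E1 n := by
      intro i _
      have := Ucum_le q a i
      rwa [hadef, ← Finset.mul_sum] at this
    have hVB : ∀ i ≤ N, ∑ n ∈ Finset.range i, q n - Ucum q a i
        ≤ c2 * ∑ n ∈ Finset.range i, E2 n := by
      intro i hi
      have := Ucum_resid q a b N
        (fun n hn => mul_nonneg hc2pos.le (hE n hn).2)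
        (fun j hj => by simpa [hadef, hbdef] using hcon j hj) i hi
      rwa [hbdef, ← Finset.mul_sum] at this
    have hpos1 : ¬ a1 * g2 ≤ g1 → 0 < a1 * g2 := fun h => hg1.trans (lt_of_not_ge h)
    have hpos2 : ¬ a2 * g1 ≤ g2 → 0 < a2 * g1 := fun h => hg2.trans (lt_of_not_ge h)
    set D1v : ℕ → ℝ := fun i => if a1 * g2 ≤ g1 then 0 else u i / (a1 * g2) with hD1v
    set D2v : ℕ → ℝ := fun i => if a2 * g1 ≤ g2 then 0 else v i / (a2 * g1) with hD2v
    set P1v : ℕ → ℝ := fun i => (if a1 * g2 ≤ g1 then u i / g1 else 0) + a2 * D2v i with hP1v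
    set P2v : ℕ → ℝ := fun i => (if a2 * g1 ≤ g2 then v i / g2 else 0) + a1 * D1v i with hP2v
    have hD1nn : ∀ n < N, 0 ≤ D1v n := by
      intro n hn
      rw [hD1v]
      split_ifs with h
      · exact le_rfl
      · exact div_nonneg (hu0 n hn) (hpos1 h).le
    have hD2nn : ∀ n < N, 0 ≤ D2v n := by
      intro n hn
      rw [hD2v]
      split_ifs with h
      · exact le_rfl
      · exact div_nonneg (hv0 n hn) (hpos2 h).le
    have hP1nn : ∀ n < N, 0 ≤ P1v n := by
      intro n hn
      rw [hP1v]
      refine add_nonneg ?_ (mul_nonneg ha2.1 (hD2nn n hn))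
      split_ifs with h
      · exact div_nonneg (hu0 n hn) hg1.le
      · exact le_rfl
    have hP2nn : ∀ n < N, 0 ≤ P2v n := by
      intro n hn
      rw [hP2v]
      refine add_nonneg ?_ (mul_nonneg ha1.1 (hD1nn n hn))
      split_ifs with h
      · exact div_nonneg (hv0 n hn) hg2.le
      · exact le_rfl
    have key1 : ∀ n : ℕ, E1 n - P1v n + a2 * D2v n - D1v n = E1 n - u n / c1 := by
      intro n
      simp only [hP1v, hD1v, hD2v]
      by_cases h : a1 * g2 ≤ g1
      · have hc : c1 = g1 := max_eq_left h
        simp only [h, if_true, hc]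
        ring
      · have hc : c1 = a1 * g2 := max_eq_right (le_of_not_ge h)
        simp only [h, if_false, hc]
        ring
    have key2 : ∀ n : ℕ, E2 n - P2v n + a1 * D1v n - D2v n = E2 n - v n / c2 := by
      intro n
      simp only [hP2v, hD2v, hD1v]
      by_cases h : a2 * g1 ≤ g2
      · have hc : c2 = g2 := max_eq_left h
        simp only [h, if_true, hc]
        ring
      · have hc : c2 = a2 * g1 := max_eq_right (le_of_not_ge h)
        simp only [h, if_false, hc]
        ring
    have keyt : ∀ n : ℕ, g1 * P1v n + g2 * P2v n = q n := by
      intro n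
      have hqn : q n = u n + v n := by simp [hvdef]
      simp only [hP1v, hP2v, hD1v, hD2v]
      by_cases h1 : a1 * g2 ≤ g1 <;> by_cases h2 : a2 * g1 ≤ g2 <;>
          simp only [h1, h2, if_true, if_false]
      · rw [hqn]; field_simp; ring
      · have hx := (hpos2 h2).ne'
        have ha2pos : 0 < a2 := by nlinarith [hpos2 h2]
        rw [hqn]; field_simp; ring
      · have hx := (hpos1 h1).ne'
        have ha1pos : 0 < a1 := by nlinarith [hpos1 h1]
        rw [hqn]; field_simp; ring
      · have hx1 := (hpos1 h1).ne'
        have hx2 := (hpos2 h2).ne'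
        have ha1pos : 0 < a1 := by nlinarith [hpos1 h1]
        have ha2pos : 0 < a2 := by nlinarith [hpos2 h2]
        rw [hqn]; field_simp; ring
    refine ⟨P1v, P2v, D1v, D2v, ?_, ?_, ?_⟩
    · exact fun i hi => ⟨hP1nn i hi, hP2nn i hi, hD1nn i hi, hD2nn i hi⟩
    · intro i hi
      have hiN : i + 1 ≤ N := hi
      constructor
      · calc (0:ℝ) ≤ ∑ n ∈ Finset.range (i+1), (E1 n - u n / c1) := by
              rw [Finset.sum_sub_distrib, ← Finset.sum_div, hUsum, sub_nonneg,
                div_le_iff₀ hc1pos, mul_comm]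
              exact hUA (i+1) hiN
          _ = _ := (Finset.sum_congr rfl fun n _ => (key1 n).symm)
      · calc (0:ℝ) ≤ ∑ n ∈ Finset.range (i+1), (E2 n - v n / c2) := by
              rw [Finset.sum_sub_distrib, ← Finset.sum_div, hVsum, sub_nonneg,
                div_le_iff₀ hc2pos, mul_comm]
              exact hVB (i+1) hiN
          _ = _ := (Finset.sum_congr rfl fun n _ => (key2 n).symm)
    · refine Finset.sum_congr rfl fun i _ => ?_
      have harg : (1:ℝ) + g1 * P1v i + g2 * P2v i = 1 + q i := by
        rw [← keyt i]; ring
      rw [harg]
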